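/- Quasitoric braids of a fixed strand number k form a subgroup of the braid group B_k; in particular the inverse of a quasitoric braid is (equivalent to) a quasitoric braid, and the product of two quasitoric braids of types (k,n₁) and (k,n₂) is a quasitoric braid of type (k, n₁+n₂). -/

import Mathlib

/-- The braid relations on `k` strands, with generators `σ₁, …, σ_{k-1}` indexed by
`Fin (k-1)`: `σᵢσⱼσᵢ = σⱼσᵢσⱼ` for `|i - j| = 1` and `σᵢσⱼ = σⱼσᵢ` for `|i - j| ≥ 2`. -/
def braidRels (k : ℕ) : Set (FreeGroup (Fin (k - 1))) :=
  {r | (∃ i j : Fin (k - 1), (i : ℕ) + 1 = (j : ℕ) ∧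
          r = FreeGroup.of i * FreeGroup.of j * FreeGroup.of i *
              (FreeGroup.of j * FreeGroup.of i * FreeGroup.of j)⁻¹) ∨
       (∃ i j : Fin (k - 1), (i : ℕ) + 2 ≤ (j : ℕ) ∧
          r = FreeGroup.of i * FreeGroup.of j * (FreeGroup.of j * FreeGroup.of i)⁻¹)}

/-- The braid group `B_k` on `k` strands. -/
def BraidGroup (k : ℕ) := PresentedGroup (braidRels k)

noncomputable instance (k : ℕ) : Group (BraidGroup k) :=
  inferInstanceAs (Group (PresentedGroup (braidRels k)))

/-- The standard generator `σᵢ` of `B_k`. -/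
def braidGen (k : ℕ) (i : Fin (k - 1)) : BraidGroup k := PresentedGroup.of i

/-- `β` is a quasitoric braid of type `(k, n)`: it is obtained from the toric braid
`τ_{k,n} = (σ₁⋯σ_{k-1})ⁿ` by replacing some letters `σᵢ` by `σᵢ⁻¹`. -/
def IsQuasitoric {k : ℕ} (n : ℕ) (β : BraidGroup k) : Prop :=
  ∃ e : Fin n → Fin (k - 1) → ℤ, (∀ r i, e r i = 1 ∨ e r i = -1) ∧
    β = (List.ofFn fun r : Fin n =>
          (List.ofFn fun i : Fin (k - 1) => braidGen k i ^ e r i).prod).prod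

namespace QTProof

variable {k : ℕ}

noncomputable def g (k : ℕ) (i : ℕ) : BraidGroup k :=
  if h : i < k - 1 then braidGen k ⟨i, h⟩ else 1

theorem rel_eq {r : FreeGroup (Fin (k-1))} (hr : r ∈ braidRels k) :
    PresentedGroup.mk (braidRels k) r = 1 :=
  (QuotientGroup.eq_one_iff _).mpr (Subgroup.subset_normalClosure hr)

theorem braid_rel' (i j : Fin (k - 1)) (h : (i : ℕ) + 1 = (j : ℕ)) :
    braidGen k i * braidGen k j * braidGen k i = braidGen k j * braidGen k i * braidGen k j := by
  have hr := rel_eq (k := k) (Or.inl ⟨i, j, h, rfl⟩)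
  rw [map_mul, map_mul, map_mul, map_inv, map_mul, map_mul, mul_inv_eq_one] at hr
  exact hr

theorem comm_rel' (i j : Fin (k - 1)) (h : (i : ℕ) + 2 ≤ (j : ℕ)) :
    braidGen k i * braidGen k j = braidGen k j * braidGen k i := by
  have hr := rel_eq (k := k) (Or.inr ⟨i, j, h, rfl⟩)
  rw [map_mul, map_inv, map_mul, map_mul, mul_inv_eq_one] at hr
  exact hr

theorem braid_rel (i : ℕ) (h : i + 1 < k - 1) :
    g k i * g k (i + 1) * g k i = g k (i + 1) * g k i * g k (i + 1) := by
  have hi : i < k - 1 := by omega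
  rw [g, g, dif_pos hi, dif_pos h]
  exact braid_rel' ⟨i, hi⟩ ⟨i+1, h⟩ rfl

theorem comm_g (i j : ℕ) (h : i + 2 ≤ j) : Commute (g k i) (g k j) := by
  by_cases hj : j < k - 1
  · have hi : i < k - 1 := by omega
    rw [g, g, dif_pos hi, dif_pos hj]
    exact comm_rel' ⟨i, hi⟩ ⟨j, hj⟩ h
  · have : g k j = 1 := dif_neg hj
    rw [this]
    exact Commute.one_right _

noncomputable def asc (k : ℕ) (f : ℕ → ℤ) (j : ℕ) : ℕ → BraidGroup k
  | 0 => 1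
  | m + 1 => g k j ^ f j * asc k f (j + 1) m

noncomputable def desc (k : ℕ) (f : ℕ → ℤ) (j : ℕ) : ℕ → BraidGroup k
  | 0 => 1
  | m + 1 => g k (j + m) ^ f (j + m) * desc k f j m

def SignFn (f : ℕ → ℤ) : Prop := ∀ i, f i = 1 ∨ f i = -1

theorem comm_g_asc (i m : ℕ) (t : ℤ) (f : ℕ → ℤ) : ∀ j, i + 2 ≤ j →
    Commute (g k i ^ t) (asc k f j m) := by
  induction m with
  | zero => intro j hj; exact Commute.one_right _
  | succ m ih =>
    intro j hj
    exact Commute.mul_right ((comm_g i j hj).zpow_zpow t (f j)) (ih (j+1) (by omega))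

theorem comm_asc_asc (N : ℕ) (f h : ℕ → ℤ) (j M : ℕ) : ∀ l, l + N + 1 ≤ j →
    Commute (asc k f l N) (asc k h j M) := by
  induction N with
  | zero => intro l hl; exact Commute.one_left _
  | succ N ih =>
    intro l hl
    exact Commute.mul_left (comm_g_asc l M (f l) h j (by omega)) (ih (l+1) (by omega))

theorem L1d (i : ℕ) (h : i + 1 < k - 1) (t e : ℤ) (ht : t = 1 ∨ t = -1)
    (he : e = 1 ∨ e = -1) :
    g k i ^ t * g k (i + 1) ^ t * g k i ^ e
      = g k (i + 1) ^ e * g k i ^ t * g k (i + 1) ^ t := by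
  set a := g k i with ha
  set b := g k (i + 1) with hb
  have B : a * b * a = b * a * b := braid_rel i h
  rcases ht with rfl | rfl <;> rcases he with rfl | rfl <;>
    simp only [zpow_one, zpow_neg_one]
  · exact B
  · -- a * b * a⁻¹ = b⁻¹ * a * b
    have h2 : b * (a * b * a⁻¹) = b * (b⁻¹ * a * b) := by
      have h3 : b * (a * b * a⁻¹) = (b * a * b) * a⁻¹ := by group
      rw [h3, ← B]; group
    exact mul_left_cancel h2
  · -- a⁻¹ * b⁻¹ * a = b * a⁻¹ * b⁻¹
    have h2 : (b * a) * (a⁻¹ * b⁻¹ * a) = (b * a) * (b * a⁻¹ * b⁻¹) := by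
      have h3 : (b * a) * (b * a⁻¹ * b⁻¹) = (b * a * b) * (a⁻¹ * b⁻¹) := by group
      rw [h3, ← B]; group
    exact mul_left_cancel h2
  · -- a⁻¹ * b⁻¹ * a⁻¹ = b⁻¹ * a⁻¹ * b⁻¹
    have h2 : (b * a * b)⁻¹ = (a * b * a)⁻¹ := by rw [B]
    calc a⁻¹ * b⁻¹ * a⁻¹ = (a * b * a)⁻¹ := by group
      _ = (b * a * b)⁻¹ := by rw [B]
      _ = b⁻¹ * a⁻¹ * b⁻¹ := by group

theorem L1c (i : ℕ) (h : i + 1 < k - 1) (t e : ℤ) (ht : t = 1 ∨ t = -1)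
    (he : e = 1 ∨ e = -1) :
    g k (i + 1) ^ t * g k i ^ e * g k (i + 1) ^ (-t)
      = g k i ^ (-t) * g k (i + 1) ^ e * g k i ^ t := by
  have h4 : g k i ^ t * (g k (i+1) ^ t * g k i ^ e * g k (i+1) ^ (-t))
      = g k i ^ t * (g k i ^ (-t) * g k (i+1) ^ e * g k i ^ t) := by
    have h5 : g k i ^ t * (g k (i+1) ^ t * g k i ^ e * g k (i+1) ^ (-t))
        = (g k i ^ t * g k (i+1) ^ t * g k i ^ e) * g k (i+1) ^ (-t) := by group
    rw [h5, L1d i h t e ht he]; group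
  exact mul_left_cancel h4

theorem asc_add (f : ℕ → ℤ) (a : ℕ) : ∀ (j b : ℕ),
    asc k f j (a + b) = asc k f j a * asc k f (j + a) b := by
  induction a with
  | zero => intro j b; simp [asc]
  | succ a ih =>
    intro j b
    have h1 : a + 1 + b = (a + b) + 1 := by omega
    rw [h1]
    show g k j ^ f j * asc k f (j+1) (a+b) = (g k j ^ f j * asc k f (j+1) a) * asc k f (j + (a+1)) b
    rw [ih (j+1) b, show j + 1 + a = j + (a+1) by omega, mul_assoc]

theorem asc_congr {f h : ℕ → ℤ} (m : ℕ) : ∀ j, (∀ i, j ≤ i → i < j + m → f i = h i) →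
    asc k f j m = asc k h j m := by
  induction m with
  | zero => intro j _; rfl
  | succ m ih =>
    intro j hfh
    show g k j ^ f j * asc k f (j+1) m = g k j ^ h j * asc k h (j+1) m
    rw [hfh j le_rfl (by omega), ih (j+1) (fun i h1 h2 => hfh i (by omega) (by omega))]

theorem star (t : ℤ) (ht : t = 1 ∨ t = -1) (e : ℕ → ℤ) (he : SignFn e) :
    ∀ (M j : ℕ), j + M ≤ k - 2 →
    asc k (fun _ => t) (j + 1) M * asc k e j M
      = g k j ^ (-t) * asc k (fun i => e (i - 1)) (j + 1) M
          * asc k (fun _ => t) j (M + 1) := by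
  intro M
  induction M with
  | zero =>
    intro j hj
    show (1 : BraidGroup k) * 1 = g k j ^ (-t) * 1 * (g k j ^ t * 1)
    rw [mul_one, mul_one, mul_one, ← zpow_add, neg_add_cancel, zpow_zero]
  | succ M ih =>
    intro j hj
    have hb : j + 1 < k - 1 := by omega
    -- LHS = g (j+1)^t * asc(const) (j+2) M * (g j ^ e j * asc e (j+1) M)
    show (g k (j+1) ^ t * asc k (fun _ => t) (j+2) M) * (g k j ^ e j * asc k e (j+1) M)
      = g k j ^ (-t) * (g k (j+1) ^ (e ((j+1)-1)) * asc k (fun i => e (i-1)) (j+2) M)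
          * (g k j ^ t * asc k (fun _ => t) (j+1) (M+1))
    have c1 : asc k (fun _ => t) (j+2) M * g k j ^ e j
        = g k j ^ e j * asc k (fun _ => t) (j+2) M :=
      ((comm_g_asc j M (e j) (fun _ => t) (j+2) (by omega)).symm).eq
    calc (g k (j+1) ^ t * asc k (fun _ => t) (j+2) M) * (g k j ^ e j * asc k e (j+1) M)
        = g k (j+1) ^ t * ((asc k (fun _ => t) (j+2) M * g k j ^ e j) * asc k e (j+1) M) := by
          group
      _ = g k (j+1) ^ t * (g k j ^ e j * (asc k (fun _ => t) (j+2) M * asc k e (j+1) M)) := by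
          rw [c1]; group
      _ = g k (j+1) ^ t * (g k j ^ e j * (g k (j+1) ^ (-t) *
            asc k (fun i => e (i-1)) (j+2) M * asc k (fun _ => t) (j+1) (M+1))) := by
          rw [ih (j+1) (by omega)]
      _ = (g k (j+1) ^ t * g k j ^ e j * g k (j+1) ^ (-t)) *
            (asc k (fun i => e (i-1)) (j+2) M * asc k (fun _ => t) (j+1) (M+1)) := by
          group
      _ = (g k j ^ (-t) * g k (j+1) ^ e j * g k j ^ t) *
            (asc k (fun i => e (i-1)) (j+2) M * asc k (fun _ => t) (j+1) (M+1)) := by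
          rw [L1c j hb t (e j) ht (he j)]
      _ = g k j ^ (-t) * (g k (j+1) ^ e j * ((g k j ^ t * asc k (fun i => e (i-1)) (j+2) M) *
            asc k (fun _ => t) (j+1) (M+1))) := by group
      _ = g k j ^ (-t) * (g k (j+1) ^ (e ((j+1)-1)) * ((asc k (fun i => e (i-1)) (j+2) M * g k j ^ t) *
            asc k (fun _ => t) (j+1) (M+1))) := by
          rw [(comm_g_asc j M t (fun i => e (i-1)) (j+2) (by omega)).eq]
          norm_num
      _ = g k j ^ (-t) * (g k (j+1) ^ (e ((j+1)-1)) * asc k (fun i => e (i-1)) (j+2) M)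
          * (g k j ^ t * asc k (fun _ => t) (j+1) (M+1)) := by group

theorem lemE (m j : ℕ) (hj1 : 1 ≤ j) (hjm : j ≤ m) (hm : m ≤ k - 2)
    (t : ℤ) (ht : t = 1 ∨ t = -1) (e : ℕ → ℤ) (he : SignFn e) :
    ∃ A : ℕ → ℤ, SignFn A ∧
      asc k (fun _ => t) j (m + 1 - j) * asc k e 0 m
        = asc k A 0 (m + 1) * asc k (fun _ => t) (j - 1) (m + 2 - j) := by
  obtain ⟨j', rfl⟩ : ∃ j', j = j' + 1 := ⟨j - 1, by omega⟩
  set M := m - j' with hM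
  refine ⟨fun i => if i < j' then e i else if i = j' then -t else e (i - 1), ?_, ?_⟩
  · intro i
    dsimp only
    split
    · exact he i
    · split
      · rcases ht with rfl | rfl
        · right; rfl
        · left; rfl
      · exact he (i - 1)
  set A : ℕ → ℤ := fun i => if i < j' then e i else if i = j' then -t else e (i - 1) with hA
  have h1 : m + 1 - (j' + 1) = M := by omega
  have h2 : m + 2 - (j' + 1) = M + 1 := by omega
  have h3 : j' + 1 - 1 = j' := by omega
  rw [h1, h2, h3]
  -- split asc e 0 m
  have hsplit : asc k e 0 m = asc k e 0 j' * asc k e j' M := by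
    have : m = j' + M := by omega
    rw [this, asc_add]
    norm_num
  -- split asc A 0 (m+1)
  have hsplitA : asc k A 0 (m + 1)
      = asc k A 0 j' * (g k j' ^ A j' * asc k A (j' + 1) M) := by
    have : m + 1 = j' + (M + 1) := by omega
    rw [this, asc_add]
    norm_num
    rfl
  have hAe : asc k A 0 j' = asc k e 0 j' := by
    refine asc_congr j' 0 (fun i h1ated h2i => ?_)
    simp only [hA, if_pos (by omega : i < j')]
  have hAj : A j' = -t := by simp [hA]
  have hAshift : asc k A (j' + 1) M = asc k (fun i => e (i - 1)) (j' + 1) M := by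
    refine asc_congr M (j' + 1) (fun i hi1 hi2 => ?_)
    simp only [hA, if_neg (by omega : ¬ i < j'), if_neg (by omega : ¬ i = j')]
  have hcomm : Commute (asc k e 0 j') (asc k (fun _ => t) (j' + 1) M) :=
    comm_asc_asc j' e (fun _ => t) (j' + 1) M 0 (by omega)
  have hstar := star (k := k) t ht e he M j' (by simp only [hM]; omega)
  calc asc k (fun _ => t) (j' + 1) M * asc k e 0 m
      = asc k (fun _ => t) (j' + 1) M * (asc k e 0 j' * asc k e j' M) := by rw [hsplit]
    _ = (asc k (fun _ => t) (j' + 1) M * asc k e 0 j') * asc k e j' M := by group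
    _ = (asc k e 0 j' * asc k (fun _ => t) (j' + 1) M) * asc k e j' M := by rw [hcomm.symm.eq]
    _ = asc k e 0 j' * (asc k (fun _ => t) (j' + 1) M * asc k e j' M) := by group
    _ = asc k e 0 j' * (g k j' ^ (-t) * asc k (fun i => e (i - 1)) (j' + 1) M
          * asc k (fun _ => t) j' (M + 1)) := by rw [hstar]
    _ = (asc k A 0 j' * (g k j' ^ A j' * asc k A (j' + 1) M))
          * asc k (fun _ => t) j' (M + 1) := by rw [hAe, hAj, hAshift]; group
    _ = asc k A 0 (m + 1) * asc k (fun _ => t) j' (M + 1) := by rw [hsplitA]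

theorem chain (m : ℕ) (hm : m ≤ k - 2) (t : ℤ) (ht : t = 1 ∨ t = -1) :
    ∀ (L : List (ℕ → ℤ)), (∀ f ∈ L, SignFn f) → L.length ≤ m →
    ∃ L' : List (ℕ → ℤ), L'.length = L.length + 1 ∧ (∀ f ∈ L', SignFn f) ∧
      asc k (fun _ => t) L.length (m + 1 - L.length)
          * (L.map (fun f => asc k f 0 m)).prod
        = (L'.map (fun A => asc k A 0 (m + 1))).prod := by
  intro L
  induction L with
  | nil =>
    intro _ _
    refine ⟨[fun _ => t], by simp, fun f hf => ?_, by simp⟩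
    · rcases List.mem_singleton.mp hf with rfl
      intro i; exact ht
  | cons f L ih =>
    intro hsig hlen
    have hj1 : 1 ≤ L.length + 1 := by omega
    have hjm : L.length + 1 ≤ m := by simpa using hlen
    obtain ⟨A, hAs, hAeq⟩ := lemE (k := k) m (L.length + 1) hj1 hjm hm t ht f
      (hsig f List.mem_cons_self)
    obtain ⟨L', hL'len, hL's, hL'eq⟩ := ih (fun f hf => hsig f (List.mem_cons_of_mem _ hf)) (by omega)
    refine ⟨A :: L', by simp [hL'len], ?_, ?_⟩
    · intro f' hf'
      rcases List.mem_cons.mp hf' with rfl | h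
      · exact hAs
      · exact hL's f' h
    · have e1 : (L.length + 1 : ℕ) - 1 = L.length := by omega
      have e2 : m + 2 - (L.length + 1) = m + 1 - L.length := by omega
      calc asc k (fun _ => t) (f :: L).length (m + 1 - (f :: L).length)
            * ((f :: L).map (fun f => asc k f 0 m)).prod
          = (asc k (fun _ => t) (L.length + 1) (m + 1 - (L.length + 1)) * asc k f 0 m)
              * (L.map (fun f => asc k f 0 m)).prod := by
            simp [List.length_cons, mul_assoc]
        _ = (asc k A 0 (m + 1) * asc k (fun _ => t) L.length (m + 1 - L.length))
              * (L.map (fun f => asc k f 0 m)).prod := by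
            rw [hAeq, e1, e2]
        _ = asc k A 0 (m + 1) * (asc k (fun _ => t) L.length (m + 1 - L.length)
              * (L.map (fun f => asc k f 0 m)).prod) := by group
        _ = asc k A 0 (m + 1) * (L'.map (fun A => asc k A 0 (m + 1))).prod := by rw [hL'eq]
        _ = ((A :: L').map (fun A => asc k A 0 (m + 1))).prod := by simp

theorem descRows (m : ℕ) (hm : m ≤ k - 1) (d : ℕ → ℤ) (hd : SignFn d) :
    ∃ L : List (ℕ → ℤ), L.length = m ∧ (∀ f ∈ L, SignFn f) ∧
      desc k d 0 m = (L.map (fun A => asc k A 0 m)).prod := by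
  induction m with
  | zero => exact ⟨[], rfl, by simp, by simp [desc]⟩
  | succ m ih =>
    obtain ⟨L, hlen, hsig, heq⟩ := ih (by omega)
    have hm2 : m ≤ k - 2 := by omega
    obtain ⟨L', hL'len, hL's, hL'eq⟩ := chain (k := k) m hm2 (d m) (hd m) L hsig (le_of_eq hlen)
    refine ⟨L', by rw [hL'len, hlen], hL's, ?_⟩
    have hdesc : desc k d 0 (m + 1) = g k m ^ d m * desc k d 0 m := by
      show g k (0 + m) ^ d (0 + m) * desc k d 0 m = _
      rw [Nat.zero_add]
    rw [hdesc, heq, ← hL'eq, hlen]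
    have : m + 1 - m = 1 := by omega
    rw [this]
    show g k m ^ d m * _ = (g k m ^ d m * 1) * _
    rw [mul_one]

theorem desc_peel (h : ℕ → ℤ) (M : ℕ) : ∀ j,
    desc k h j (M + 1) = desc k h (j + 1) M * g k j ^ h j := by
  induction M with
  | zero =>
    intro j
    show g k (j + 0) ^ h (j + 0) * 1 = 1 * g k j ^ h j
    rw [Nat.add_zero, one_mul, mul_one]
  | succ M ih =>
    intro j
    show g k (j + (M + 1)) ^ h (j + (M + 1)) * desc k h j (M + 1)
      = (g k (j + 1 + M) ^ h (j + 1 + M) * desc k h (j + 1) M) * g k j ^ h j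
    rw [ih j, show j + (M + 1) = j + 1 + M by omega, mul_assoc]

theorem inv_asc (f : ℕ → ℤ) (M : ℕ) : ∀ j,
    (asc k f j M)⁻¹ = desc k (fun i => -f i) j M := by
  induction M with
  | zero => intro j; simp [asc, desc]
  | succ M ih =>
    intro j
    show (g k j ^ f j * asc k f (j + 1) M)⁻¹ = desc k (fun i => -f i) j (M + 1)
    rw [desc_peel, mul_inv_rev, ih (j + 1), ← zpow_neg]

theorem key (A : ℕ → ℤ) (hA : SignFn A) :
    ∃ L : List (ℕ → ℤ), (∀ f ∈ L, SignFn f) ∧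
      (asc k A 0 (k - 1))⁻¹ = (L.map (fun B => asc k B 0 (k - 1))).prod := by
  have hs : SignFn (fun i => -A i) := by
    intro i
    rcases hA i with h | h <;> simp [h]
  obtain ⟨L, _, hsig, heq⟩ := descRows (k := k) (k - 1) le_rfl (fun i => -A i) hs
  exact ⟨L, hsig, by rw [inv_asc, heq]⟩

theorem asc_ofFn (m : ℕ) : ∀ (j : ℕ) (f : ℕ → ℤ),
    asc k f j m = (List.ofFn fun i : Fin m => g k (j + i) ^ f (j + i)).prod := by
  induction m with
  | zero => intro j f; simp [asc]
  | succ m ih =>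
    intro j f
    rw [List.ofFn_succ, List.prod_cons]
    show g k j ^ f j * asc k f (j + 1) m = _
    rw [ih (j + 1) f]
    simp only [Fin.val_succ, Fin.val_zero, Nat.add_zero]
    congr 1
    refine congrArg List.prod (congrArg List.ofFn ?_)
    funext i
    rw [show j + 1 + (i : ℕ) = j + ((i : ℕ) + 1) from by omega]

/-- extension of a `Fin`-indexed sign vector to ℕ -/
def ext (k : ℕ) (e : Fin (k - 1) → ℤ) : ℕ → ℤ :=
  fun i => if h : i < k - 1 then e ⟨i, h⟩ else 1

theorem ext_sign (e : Fin (k - 1) → ℤ) (he : ∀ i, e i = 1 ∨ e i = -1) :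
    SignFn (ext k e) := by
  intro i
  unfold ext
  split
  · exact he _
  · left; rfl

theorem row_eq (e : Fin (k - 1) → ℤ) :
    (List.ofFn fun i : Fin (k - 1) => braidGen k i ^ e i).prod
      = asc k (ext k e) 0 (k - 1) := by
  rw [asc_ofFn]
  refine congrArg List.prod (congrArg List.ofFn ?_)
  funext i
  have h1 : (0 + (i : ℕ)) < k - 1 := by omega
  rw [show g k (0 + (i : ℕ)) = braidGen k ⟨0 + (i : ℕ), h1⟩ from dif_pos h1]
  rw [show ext k e (0 + (i : ℕ)) = e ⟨0 + (i : ℕ), h1⟩ from dif_pos h1]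
  congr 1 <;> simp [Fin.ext_iff]

theorem qt_one : IsQuasitoric (k := k) 0 1 :=
  ⟨fun r => r.elim0, fun r => r.elim0, by simp⟩

theorem qt_mul (n₁ n₂ : ℕ) (β₁ β₂ : BraidGroup k) (h₁ : IsQuasitoric n₁ β₁)
    (h₂ : IsQuasitoric n₂ β₂) : IsQuasitoric (n₁ + n₂) (β₁ * β₂) := by
  obtain ⟨e₁, hs₁, rfl⟩ := h₁
  obtain ⟨e₂, hs₂, rfl⟩ := h₂
  refine ⟨Fin.addCases e₁ e₂, ?_, ?_⟩
  · intro r i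
    refine Fin.addCases (fun r => ?_) (fun r => ?_) r
    · dsimp only
      rw [Fin.addCases_left]
      exact hs₁ r i
    · dsimp only
      rw [Fin.addCases_right]
      exact hs₂ r i
  · rw [List.ofFn_add, List.prod_append]
    congr 1
    · refine congrArg List.prod (congrArg List.ofFn ?_)
      funext r
      refine congrArg List.prod (congrArg List.ofFn ?_)
      funext i
      dsimp only
      show braidGen k i ^ e₁ r i = braidGen k i ^ Fin.addCases (motive := fun _ => Fin (k - 1) → ℤ) e₁ e₂ (Fin.castAdd n₂ r) i
      rw [Fin.addCases_left]
    · refine congrArg List.prod (congrArg List.ofFn ?_)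
      funext r
      refine congrArg List.prod (congrArg List.ofFn ?_)
      funext i
      dsimp only
      rw [Fin.addCases_right]

theorem qt_row (A : ℕ → ℤ) (hA : SignFn A) : IsQuasitoric 1 (asc k A 0 (k - 1)) := by
  refine ⟨fun _ i => A i, fun _ i => hA i, ?_⟩
  have h1 : asc k (ext k (fun i : Fin (k-1) => A i)) 0 (k - 1) = asc k A 0 (k - 1) := by
    refine asc_congr (k - 1) 0 (fun i hi1 hi2 => ?_)
    exact dif_pos (by omega)
  rw [show (List.ofFn fun r : Fin 1 =>
        (List.ofFn fun i : Fin (k - 1) => braidGen k i ^ A i).prod).prod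
      = (List.ofFn fun i : Fin (k - 1) => braidGen k i ^ A i).prod by simp,
    row_eq (fun i : Fin (k-1) => A i), h1]

theorem qt_list (L : List (ℕ → ℤ)) (hL : ∀ f ∈ L, SignFn f) :
    ∃ n, IsQuasitoric n ((L.map (fun A => asc k A 0 (k - 1))).prod) := by
  induction L with
  | nil => exact ⟨0, by simpa using qt_one⟩
  | cons A L ih =>
    obtain ⟨n, hn⟩ := ih (fun f hf => hL f (List.mem_cons_of_mem _ hf))
    refine ⟨1 + n, ?_⟩
    rw [List.map_cons, List.prod_cons]
    exact qt_mul 1 n _ _ (qt_row A (hL A List.mem_cons_self)) hn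

theorem qt_inv (n : ℕ) (β : BraidGroup k) (h : IsQuasitoric n β) :
    ∃ n', IsQuasitoric n' β⁻¹ := by
  induction n generalizing β with
  | zero =>
    obtain ⟨e, hs, rfl⟩ := h
    exact ⟨0, by simpa using qt_one⟩
  | succ n ih =>
    obtain ⟨e, hs, rfl⟩ := h
    rw [List.ofFn_succ, List.prod_cons]
    set R := (List.ofFn fun i : Fin (k - 1) => braidGen k i ^ e 0 i).prod with hR
    have hrest : IsQuasitoric n ((List.ofFn fun r : Fin n =>
        (List.ofFn fun i : Fin (k - 1) => braidGen k i ^ e r.succ i).prod).prod) :=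
      ⟨fun r => e r.succ, fun r i => hs r.succ i, rfl⟩
    obtain ⟨n₂, hn₂⟩ := ih _ hrest
    have hAsign : SignFn (ext k (e 0)) := ext_sign (e 0) (hs 0)
    obtain ⟨L, hLs, hLeq⟩ := key (ext k (e 0)) hAsign
    obtain ⟨n₃, hn₃⟩ := qt_list L hLs
    have hRinv : (R : BraidGroup k)⁻¹ = (L.map (fun B => asc k B 0 (k - 1))).prod := by
      rw [hR, row_eq (e 0), hLeq]
    rw [mul_inv_rev]
    refine ⟨n₂ + n₃, qt_mul n₂ n₃ _ _ hn₂ ?_⟩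
    rw [hRinv]
    exact hn₃

end QTProof

/-- Quasitoric braids on `k` strands form a subgroup of `B_k`: the product of
quasitoric braids of types `(k,n₁)` and `(k,n₂)` is quasitoric of type `(k,n₁+n₂)`,
the inverse of a quasitoric braid is quasitoric, and the set of quasitoric braids
is (the carrier of) a subgroup. -/
theorem quasitoric_subgroup (k : ℕ) :
    (∀ (n₁ n₂ : ℕ) (β₁ β₂ : BraidGroup k), IsQuasitoric n₁ β₁ → IsQuasitoric n₂ β₂ →
        IsQuasitoric (n₁ + n₂) (β₁ * β₂)) ∧
    (∀ (n : ℕ) (β : BraidGroup k), IsQuasitoric n β → ∃ n', IsQuasitoric n' β⁻¹) ∧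
    (∃ S : Subgroup (BraidGroup k), ∀ β, β ∈ S ↔ ∃ n, IsQuasitoric n β) := by
  refine ⟨QTProof.qt_mul, QTProof.qt_inv, ⟨⟨⟨⟨{β | ∃ n, IsQuasitoric n β}, ?_⟩, ?_⟩, ?_⟩, fun β => Iff.rfl⟩⟩
  · rintro a b ⟨n₁, h₁⟩ ⟨n₂, h₂⟩
    exact ⟨n₁ + n₂, QTProof.qt_mul n₁ n₂ a b h₁ h₂⟩
  · exact ⟨0, QTProof.qt_one⟩
  · rintro a ⟨n, h⟩
    exact QTProof.qt_inv n a h
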